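/- Let f : S → T be a semigroup homomorphism. If T is IP-regular and the subset f⁻¹[E(T)] of S is IP-regular (as a subset), then S is IP-regular. -/

import Mathlib

/-- A subset `A` of a semigroup `S` is *strongly IP-regular* if for every sequence `x` in `S`
with `FP x ⊆ A` there is no sequence `y` in `S` with `FP y ⊆ x₀ · FP₁ x`. -/
def StronglyIPRegular {S : Type*} [Semigroup S] (A : Set S) : Prop :=
  ∀ x : Stream' S, Hindman.FP x ⊆ A →
    ∀ y : Stream' S, ¬ Hindman.FP y ⊆ (x.head * ·) '' Hindman.FP x.tail

/-- A semigroup `S` is *IP-regular* if `S \ E(S)`, the complement of the set of idempotent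
elements, is the union of finitely many strongly IP-regular subsets. -/
def IPRegular (S : Type*) [Semigroup S] : Prop :=
  ∃ (n : ℕ) (f : Fin n → Set S), (∀ i, StronglyIPRegular (f i)) ∧
    {s : S | s * s = s}ᶜ = ⋃ i, f i

/-- A subset `P` of a semigroup `S` is *IP-regular (as a subset)* if `P \ E(P)`, where `E(P)`
is the set of idempotent elements of `S` belonging to `P`, is the union of finitely many
strongly IP-regular subsets. -/
def IPRegularSet {S : Type*} [Semigroup S] (P : Set S) : Prop :=
  ∃ (n : ℕ) (f : Fin n → Set S), (∀ i, StronglyIPRegular (f i)) ∧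
    P \ {s : S | s * s = s} = ⋃ i, f i

/-- If `f : S → T` is a semigroup homomorphism, `T` is IP-regular, and `f⁻¹[E(T)]` is
IP-regular as a subset of `S`, then `S` is IP-regular. -/

private lemma fp_map_mem {S T : Type*} [Semigroup S] [Semigroup T] (f : S →ₙ* T)
    {x : Stream' S} {m : S} (h : m ∈ Hindman.FP x) : f m ∈ Hindman.FP (x.map f) := by
  induction h with
  | head' a => exact Stream'.head_map f a ▸ Hindman.FP.head _
  | tail' a m h ih => exact Hindman.FP.tail _ _ (by rwa [Stream'.tail_map])
  | cons' a m h ih =>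
      rw [map_mul]
      rw [← Stream'.head_map f a]
      exact Hindman.FP.cons _ _ (by rwa [Stream'.tail_map])

private lemma fp_map_rev {S T : Type*} [Semigroup S] [Semigroup T] (f : S →ₙ* T)
    {x : Stream' S} {t : T} (h : t ∈ Hindman.FP (x.map f)) :
    ∃ m ∈ Hindman.FP x, f m = t := by
  generalize hy : x.map f = y at h
  induction h generalizing x with
  | head' a => exact ⟨x.head, Hindman.FP.head _, by rw [← hy, Stream'.head_map]⟩
  | tail' a m h ih =>
      obtain ⟨m', hm', rfl⟩ := ih (x := x.tail) (by rw [← hy, Stream'.tail_map])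
      exact ⟨m', Hindman.FP.tail _ _ hm', rfl⟩
  | cons' a m h ih =>
      obtain ⟨m', hm', rfl⟩ := ih (x := x.tail) (by rw [← hy, Stream'.tail_map])
      exact ⟨x.head * m', Hindman.FP.cons _ _ hm', by rw [map_mul, ← hy, Stream'.head_map]⟩

private lemma sir_preimage {S T : Type*} [Semigroup S] [Semigroup T] (f : S →ₙ* T)
    {A : Set T} (hA : StronglyIPRegular A) : StronglyIPRegular (f ⁻¹' A) := by
  intro x hx y hy
  refine hA (x.map f) (fun t ht => ?_) (y.map f) (fun t ht => ?_)
  · obtain ⟨m, hm, rfl⟩ := fp_map_rev f ht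
    exact hx hm
  · obtain ⟨m, hm, rfl⟩ := fp_map_rev f ht
    obtain ⟨u, hu, rfl⟩ := hy hm
    refine ⟨f u, ?_, by rw [map_mul, Stream'.head_map]⟩
    rw [Stream'.tail_map]
    exact fp_map_mem f hu

theorem ipRegular_of_mulHom {S T : Type*} [Semigroup S] [Semigroup T] (f : S →ₙ* T)
    (hT : IPRegular T) (hpre : IPRegularSet (f ⁻¹' {t : T | t * t = t})) :
    IPRegular S := by
  obtain ⟨n, g, hg, hgeq⟩ := hT
  obtain ⟨m, h, hh, hheq⟩ := hpre
  refine ⟨n + m, Fin.addCases (fun j => f ⁻¹' (g j)) h, fun i => ?_, ?_⟩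
  · refine Fin.addCases (fun j => ?_) (fun j => ?_) i
    · simpa using sir_preimage f (hg j)
    · simpa using hh j
  · have key : ⋃ i, Fin.addCases (fun j => f ⁻¹' (g j)) h i
        = (⋃ j, f ⁻¹' (g j)) ∪ ⋃ j, h j := by
      apply Set.Subset.antisymm
      · refine Set.iUnion_subset fun i => ?_
        refine Fin.addCases (fun j => ?_) (fun j => ?_) i
        · simp only [Fin.addCases_left]
          exact (Set.subset_iUnion (fun j => f ⁻¹' (g j)) j).trans Set.subset_union_left
        · simp only [Fin.addCases_right]
          exact (Set.subset_iUnion h j).trans Set.subset_union_right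
      · refine Set.union_subset (Set.iUnion_subset fun j => ?_) (Set.iUnion_subset fun j => ?_)
        · exact le_trans (le_of_eq (by simp)) (Set.subset_iUnion _ (Fin.castAdd m j))
        · exact le_trans (le_of_eq (by simp)) (Set.subset_iUnion _ (Fin.natAdd n j))
    rw [key, ← hheq, ← Set.preimage_iUnion, ← hgeq]
    ext s
    simp only [Set.mem_compl_iff, Set.mem_setOf_eq, Set.mem_union, Set.mem_preimage,
      Set.mem_diff]
    constructor
    · intro hs
      by_cases hfs : f s * f s = f s
      · exact Or.inr ⟨hfs, hs⟩
      · exact Or.inl hfs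
    · rintro (hs | ⟨_, hs⟩) hid
      · exact hs (by rw [← map_mul, hid])
      · exact hs hid
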